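/- Let q be a power of a prime p, let n ≥ 2, let r be an integer with ⌈n/2⌉ ≤ r ≤ n-1 and gcd(n,r) = 1, and let g_s(y) ∈ F_{q^n}[y] be a separable q-polynomial of degree q^s that splits into linear factors over F_{q^n}. Let Q(y), U(y) ∈ F_{q^n}[y] be nonzero q-polynomials with Q(y)^{q^{n-r}} = y + U(g_s(y)) and deg(U) = q^{n-r-1}, let a_u ∈ F_{q^n} be the leading coefficient of U, and set U_2(x) := U(x) - a_u x^{q^{n-r-1}}. Let h(x) ∈ F_{q^n}[x] be the unique polynomial with h(x)^{q^{n-r}} = U(x^{q^{n}+q^{n-r}}), set Z := Q(y) - h(x), let b ∈ F_{q^n} be the unique element with b^{q^{n-r-1}} = a_u, and define W := Z^q + b·x^{q^{n-r}+1} ∈ F_{q^n}[x,y]. Then the congruence W^{q^{n-r-1}} ≡ y - U_2(x^{q^{n-r}+1}) holds modulo the ideal of F_{q^n}[x,y] generated by g_s(y) - x^{q^{n}+q^{n-r}} + x^{q^{n-r}+1}. -/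

import Mathlib

open Polynomial

/-- A `q`-polynomial (linearized polynomial): every monomial exponent is a power of `q`. -/
def IsqPoly (q : ℕ) {F : Type*} [Semiring F] (f : Polynomial F) : Prop :=
  ∀ i ∈ f.support, ∃ k : ℕ, i = q ^ k

lemma sub_dvd_aeval_sub {F R : Type*} [CommRing F] [CommRing R] [Algebra F R]
    (t t' : R) (f : Polynomial F) : t - t' ∣ aeval t f - aeval t' f := by
  simp only [aeval_def, eval₂_eq_eval_map]
  exact sub_dvd_eval_sub t t' _

lemma aeval_add_of_isqPoly {p q e : ℕ} (hp : p.Prime) (hq : q = p ^ e)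
    {F R : Type*} [CommSemiring F] [CommSemiring R] [Algebra F R] [CharP R p]
    {f : Polynomial F} (hf : IsqPoly q f) (A B : R) :
    aeval (A + B) f = aeval A f + aeval B f := by
  haveI := Fact.mk hp
  simp only [aeval_def, eval₂_eq_sum, Polynomial.sum_def]
  rw [← Finset.sum_add_distrib]
  refine Finset.sum_congr rfl fun i hi => ?_
  obtain ⟨k, rfl⟩ := hf i hi
  rw [hq, ← pow_mul, add_pow_char_pow, mul_add]

/-- Part of the proof of Theorem 3.4 (`Teo HP`): with `U = a_u·x^{q^{n-r-1}} + U_2(x)`,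
`Z := Q(y) - h(x)` and `W := Z^q + b·x^{q^{n-r}+1}` (where `b^{q^{n-r-1}} = a_u`), the
congruence `W^{q^{n-r-1}} ≡ y - U_2(x^{q^{n-r}+1})` holds modulo the curve
`g_s(y) = x^{q^n+q^{n-r}} - x^{q^{n-r}+1}`. Here `X 0` is `x` and `X 1` is `y`. -/
theorem W_pow_congruence_on_subcover
    (p q e n r s : ℕ) (hp : p.Prime) (he : 0 < e) (hq : q = p ^ e)
    (hn : 2 ≤ n) (hr1 : n ≤ 2 * r) (hr2 : r ≤ n - 1) (hgcd : Nat.gcd n r = 1)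
    (hs : 1 ≤ s)
    (F : Type*) [Field F] [Fintype F] (hF : Fintype.card F = q ^ n)
    (gs : Polynomial F)
    (hgs_q : IsqPoly q gs) (hgs_deg : gs.natDegree = q ^ s)
    (hgs_sep : gs.coeff 1 ≠ 0) (hgs_split : Splits (gs.map (RingHom.id F)))
    (Q U : Polynomial F) (hQ0 : Q ≠ 0) (hU0 : U ≠ 0)
    (hQq : IsqPoly q Q) (hUq : IsqPoly q U)
    (hUdeg : U.natDegree = q ^ (n - r - 1))
    (heq : Q ^ q ^ (n - r) = X + U.comp gs)
    (h : Polynomial F)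
    (hh : h ^ q ^ (n - r) = U.comp (X ^ (q ^ n + q ^ (n - r))))
    (b : F) (hb : b ^ q ^ (n - r - 1) = U.leadingCoeff) :
    ((Polynomial.aeval (MvPolynomial.X 1 : MvPolynomial (Fin 2) F) Q
        - Polynomial.aeval (MvPolynomial.X 0 : MvPolynomial (Fin 2) F) h) ^ q
      + MvPolynomial.C b * (MvPolynomial.X 0 : MvPolynomial (Fin 2) F) ^ (q ^ (n - r) + 1))
        ^ q ^ (n - r - 1)
      - (MvPolynomial.X 1
          - Polynomial.aeval ((MvPolynomial.X 0 : MvPolynomial (Fin 2) F) ^ (q ^ (n - r) + 1))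
              (U - C U.leadingCoeff * X ^ q ^ (n - r - 1)))
      ∈ Ideal.span {Polynomial.aeval (MvPolynomial.X 1 : MvPolynomial (Fin 2) F) gs
          - (MvPolynomial.X 0 : MvPolynomial (Fin 2) F) ^ (q ^ n + q ^ (n - r))
          + (MvPolynomial.X 0 : MvPolynomial (Fin 2) F) ^ (q ^ (n - r) + 1)} := by
  haveI hfp : Fact p.Prime := ⟨hp⟩
  -- the characteristic of `F` is `p`
  haveI : CharP F p := by
    haveI : CharP F (ringChar F) := ringChar.charP F
    obtain ⟨m, hcp, hcard⟩ := FiniteField.card F (ringChar F)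
    have hcard' : p ^ (e * n) = ringChar F ^ (m : ℕ) := by
      rw [← hcard, hF, hq, ← pow_mul]
    have hpc : p = ringChar F := by
      have hdvd : p ∣ ringChar F ^ (m : ℕ) := by
        rw [← hcard']
        exact dvd_pow_self p (by positivity)
      exact ((Nat.prime_dvd_prime_iff_eq hp hcp).mp (hp.dvd_of_dvd_pow hdvd))
    rw [hpc]; infer_instance
  haveI : CharP (MvPolynomial (Fin 2) F) p := by infer_instance
  set xP : MvPolynomial (Fin 2) F := MvPolynomial.X 0 with hxP
  set yP : MvPolynomial (Fin 2) F := MvPolynomial.X 1 with hyP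
  set AA : MvPolynomial (Fin 2) F := xP ^ (q ^ n + q ^ (n - r)) with hAA
  set BB : MvPolynomial (Fin 2) F := xP ^ (q ^ (n - r) + 1) with hBB
  set t : MvPolynomial (Fin 2) F := aeval yP gs with ht
  have hnr : 1 ≤ n - r := by omega
  have hqk : ∀ k : ℕ, q ^ k = p ^ (e * k) := fun k => by rw [hq, ← pow_mul]
  -- main computation of `W ^ (q ^ (n-r-1))`
  have hW : ((aeval yP Q - aeval xP h) ^ q + MvPolynomial.C b * BB) ^ q ^ (n - r - 1)
      = yP + aeval t U - aeval AA U
        + MvPolynomial.C U.leadingCoeff * BB ^ q ^ (n - r - 1) := by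
    have h1 : ((aeval yP Q - aeval xP h) ^ q + MvPolynomial.C b * BB) ^ q ^ (n - r - 1)
        = ((aeval yP Q - aeval xP h) ^ q) ^ q ^ (n - r - 1)
          + (MvPolynomial.C b * BB) ^ q ^ (n - r - 1) := by
      rw [hqk (n - r - 1)]
      exact add_pow_char_pow _ _ p _
    rw [h1, ← pow_mul]
    have h2 : q * q ^ (n - r - 1) = q ^ (n - r) := by
      rw [← pow_succ', show n - r - 1 + 1 = n - r from by omega]
    rw [h2]
    have h3 : (aeval yP Q - aeval xP h) ^ q ^ (n - r)
        = (aeval yP Q) ^ q ^ (n - r) - (aeval xP h) ^ q ^ (n - r) := by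
      rw [hqk (n - r)]
      exact sub_pow_char_pow (p := p) _ _ _
    rw [h3, ← map_pow, ← map_pow, heq, hh, mul_pow, ← map_pow, hb]
    simp only [map_add, aeval_X, aeval_comp, map_pow]
    try ring
  -- additivity of `U` at `AA - BB` and `BB`
  have hadd : aeval AA U = aeval (AA - BB) U + aeval BB U := by
    have := aeval_add_of_isqPoly hp hq hUq (AA - BB) BB
    rwa [sub_add_cancel] at this
  -- expansion of `U₂` at `BB`
  have hU2 : aeval BB (U - C U.leadingCoeff * X ^ q ^ (n - r - 1))
      = aeval BB U - MvPolynomial.C U.leadingCoeff * BB ^ q ^ (n - r - 1) := by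
    simp [MvPolynomial.algebraMap_eq]
  rw [Ideal.mem_span_singleton]
  obtain ⟨d, hd⟩ := sub_dvd_aeval_sub t (AA - BB) U
  exact ⟨d, by linear_combination hW + hU2 - hadd + hd⟩
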